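/- arXiv:2402.12161 — 2 statements merged into one kernel-verified Lean document; each statement's English description precedes it below -/
import Mathlib

section
/- (Randomized smoothing robustness, binary linear case) Let d : ℝ^m → {0, 1} be d(z) = 1 if ⟨u, z⟩ ≥ c, else 0, with ‖u‖₂ = 1. Define the smoothed classifier d̂(z) = argmax over y of P(d(z + ε) = y) with ε ~ N(0, σ²I_m). Suppose at input z we have P(d(z + ε) = 1) ≥ p_A > 1/2. Then for every δ with ‖δ‖₂ < σ·Φ⁻¹(p_A), we have d̂(z + δ) = 1. -/
open MeasureTheory ProbabilityTheory
open Real Set Filter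
open scoped NNReal ENNReal Topology

/-- The standard normal CDF. -/
noncomputable def stdGaussianCDF (x : ℝ) : ℝ :=
  (gaussianReal 0 1 (Set.Iic x)).toReal

/-- The inverse of the standard normal CDF. -/
noncomputable def stdGaussianCDFInv : ℝ → ℝ :=
  Function.invFun stdGaussianCDF

lemma real_conv (a b : ℝ≥0) (ha : a ≠ 0) (hb : b ≠ 0) (y : ℝ) :
    ∫ x, gaussianPDFReal 0 a x * gaussianPDFReal x b y = gaussianPDFReal 0 (a + b) y := by
  have hA : (0:ℝ) < a := lt_of_le_of_ne a.coe_nonneg (by exact_mod_cast ha.symm)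
  have hB : (0:ℝ) < b := lt_of_le_of_ne b.coe_nonneg (by exact_mod_cast hb.symm)
  set A : ℝ := (a : ℝ)
  set B : ℝ := (b : ℝ)
  have hAB : (0:ℝ) < A + B := by linarith
  set k : ℝ := (A + B) / (2 * A * B) with hk
  have hkpos : 0 < k := by positivity
  set cc : ℝ := A * y / (A + B) with hcc
  have key : ∀ x : ℝ, gaussianPDFReal 0 a x * gaussianPDFReal x b y
      = ((√(2 * π * A))⁻¹ * (√(2 * π * B))⁻¹ * rexp (-(y - 0)^2 / (2 * (A + B))))
        * rexp (-k * (x - cc) ^ 2) := by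
    intro x
    have h1 : rexp (-(x - 0) ^ 2 / (2 * A)) * rexp (-(y - x) ^ 2 / (2 * B))
        = rexp (-(y - 0) ^ 2 / (2 * (A + B))) * rexp (-k * (x - cc) ^ 2) := by
      rw [← Real.exp_add, ← Real.exp_add]
      congr 1
      rw [hk, hcc]
      field_simp
      ring
    simp only [gaussianPDFReal]
    calc ((√(2 * π * A))⁻¹ * rexp (-(x - 0) ^ 2 / (2 * A))) *
        ((√(2 * π * B))⁻¹ * rexp (-(y - x) ^ 2 / (2 * B)))
        = (√(2 * π * A))⁻¹ * (√(2 * π * B))⁻¹ *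
          (rexp (-(x - 0) ^ 2 / (2 * A)) * rexp (-(y - x) ^ 2 / (2 * B))) := by ring
      _ = _ := by rw [h1]; ring
  rw [show (fun x => gaussianPDFReal 0 a x * gaussianPDFReal x b y) = fun x =>
      ((√(2 * π * A))⁻¹ * (√(2 * π * B))⁻¹ * rexp (-(y - 0)^2 / (2 * (A + B))))
        * rexp (-k * (x - cc) ^ 2) from funext key]
  rw [integral_const_mul]
  have : ∫ x : ℝ, rexp (-k * (x - cc) ^ 2) = √(π / k) := by
    rw [integral_sub_right_eq_self (fun x => rexp (-k * x ^ 2)) cc, integral_gaussian]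
  rw [this, gaussianPDFReal]
  have hpi := Real.pi_pos
  have hcast : ((a + b : ℝ≥0) : ℝ) = A + B := by push_cast; ring
  rw [hcast]
  have hC : (√(2 * π * A))⁻¹ * (√(2 * π * B))⁻¹ * √(π / k) = (√(2 * π * (A + B)))⁻¹ := by
    rw [← Real.sqrt_inv, ← Real.sqrt_inv, ← Real.sqrt_mul (by positivity),
      ← Real.sqrt_mul (by positivity), ← Real.sqrt_inv]
    congr 1
    rw [hk]
    field_simp
  calc (√(2 * π * A))⁻¹ * (√(2 * π * B))⁻¹ * rexp (-(y - 0) ^ 2 / (2 * (A + B))) * √(π / k)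
      = ((√(2 * π * A))⁻¹ * (√(2 * π * B))⁻¹ * √(π / k)) * rexp (-(y - 0) ^ 2 / (2 * (A + B))) := by
        ring
    _ = _ := by rw [hC]

lemma cont_pdf_mean (b : ℝ≥0) (y : ℝ) : Continuous (fun x => gaussianPDFReal x b y) := by
  unfold gaussianPDFReal
  fun_prop

lemma bdd_pdf_mean (b : ℝ≥0) (y x : ℝ) : ‖gaussianPDFReal x b y‖ ≤ (√(2 * π * b))⁻¹ := by
  rw [Real.norm_eq_abs, abs_of_nonneg (gaussianPDFReal_nonneg _ _ _), gaussianPDFReal]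
  have h1 : rexp (-(y - x) ^ 2 / (2 * b)) ≤ 1 := by
    rw [Real.exp_le_one_iff]
    have hb : (0:ℝ) ≤ (b:ℝ) := b.coe_nonneg
    rcases eq_or_lt_of_le hb with h | h
    · simp [← h]
    · apply div_nonpos_of_nonpos_of_nonneg (neg_nonpos_of_nonneg (sq_nonneg _)) (by positivity)
  calc (√(2 * π * b))⁻¹ * rexp (-(y - x) ^ 2 / (2 * b)) ≤ (√(2 * π * b))⁻¹ * 1 := by
        apply mul_le_mul_of_nonneg_left h1 (by positivity)
    _ = _ := mul_one _

lemma integrable_conv (a b : ℝ≥0) (y : ℝ) :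
    Integrable (fun x => gaussianPDFReal 0 a x * gaussianPDFReal x b y) := by
  have := (integrable_gaussianPDFReal 0 a).bdd_mul
    (f := fun x => gaussianPDFReal x b y) (cont_pdf_mean b y).aestronglyMeasurable
    (ae_of_all _ (bdd_pdf_mean b y))
  simpa [mul_comm] using this

lemma lintegral_conv (a b : ℝ≥0) (ha : a ≠ 0) (hb : b ≠ 0) (y : ℝ) :
    ∫⁻ x, gaussianPDF 0 a x * gaussianPDF x b y = gaussianPDF 0 (a + b) y := by
  simp only [gaussianPDF]
  rw [lintegral_congr (fun x => (ENNReal.ofReal_mul (gaussianPDFReal_nonneg 0 a x)).symm)]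
  rw [← ofReal_integral_eq_lintegral_ofReal (integrable_conv a b y)
    (ae_of_all _ fun x => mul_nonneg (gaussianPDFReal_nonneg _ _ _) (gaussianPDFReal_nonneg _ _ _)),
    real_conv a b ha hb y]

lemma measurable_pdf2 (b : ℝ≥0) : Measurable (fun p : ℝ × ℝ => gaussianPDF p.1 b p.2) := by
  unfold gaussianPDF gaussianPDFReal
  fun_prop

lemma gaussian_prod_add (a b : ℝ≥0) :
    ((gaussianReal 0 a).prod (gaussianReal 0 b)).map (fun p : ℝ × ℝ => p.1 + p.2)
      = gaussianReal 0 (a + b) := by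
  by_cases ha : a = 0
  · subst ha
    rw [gaussianReal_zero_var, Measure.dirac_prod, Measure.map_map (by fun_prop) (by fun_prop)]
    have : ((fun p : ℝ × ℝ => p.1 + p.2) ∘ Prod.mk (0:ℝ)) = id := by funext y; simp
    rw [this, Measure.map_id, zero_add]
  by_cases hb : b = 0
  · subst hb
    rw [gaussianReal_zero_var, Measure.prod_dirac, Measure.map_map (by fun_prop) (by fun_prop)]
    have : ((fun p : ℝ × ℝ => p.1 + p.2) ∘ (fun x : ℝ => (x, (0:ℝ)))) = id := by funext y; simp
    rw [this, Measure.map_id, add_zero]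
  ext s hs
  rw [Measure.map_apply (by fun_prop) hs, Measure.prod_apply (hs.preimage (by fun_prop))]
  have h1 : ∀ x : ℝ, (Prod.mk x ⁻¹' ((fun p : ℝ × ℝ => p.1 + p.2) ⁻¹' s))
      = (x + ·) ⁻¹' s := fun x => rfl
  simp_rw [h1]
  have h2 : ∀ x : ℝ, gaussianReal 0 b ((x + ·) ⁻¹' s) = gaussianReal x b s := by
    intro x
    rw [← Measure.map_apply (by fun_prop) hs, gaussianReal_map_const_add, zero_add]
  simp_rw [h2]
  have h3 : ∀ x : ℝ, gaussianReal x b s = ∫⁻ y in s, gaussianPDF x b y := fun x =>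
    gaussianReal_apply x hb s
  simp_rw [h3]
  rw [gaussianReal_of_var_ne_zero _ ha,
    lintegral_withDensity_eq_lintegral_mul _ (measurable_gaussianPDF 0 a)
      ((measurable_pdf2 b).lintegral_prod_right')]
  simp only [Pi.mul_apply]
  have h4 : ∀ x : ℝ, gaussianPDF 0 a x * ∫⁻ y in s, gaussianPDF x b y
      = ∫⁻ y in s, gaussianPDF 0 a x * gaussianPDF x b y := by
    intro x
    rw [lintegral_const_mul _ (measurable_gaussianPDF x b)]
  simp_rw [h4]
  rw [lintegral_lintegral_swap (((measurable_gaussianPDF 0 a).comp measurable_fst).mul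
    (measurable_pdf2 b)).aemeasurable]
  have h5 : ∀ y : ℝ, ∫⁻ x, gaussianPDF 0 a x * gaussianPDF x b y = gaussianPDF 0 (a + b) y :=
    lintegral_conv a b ha hb
  simp_rw [h5]
  rw [gaussianReal_apply _ (by simp [ha]) s]

lemma pi_gaussian_map_sum (v : ℝ≥0) : ∀ (n : ℕ) (u : Fin n → ℝ),
    (Measure.pi fun _ : Fin n => gaussianReal 0 v).map (fun e => ∑ i, u i * e i)
      = gaussianReal 0 (NNReal.mk (∑ i, u i ^ 2) (by positivity) * v) := by
  intro n
  induction n with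
  | zero =>
    intro u
    have h0 : NNReal.mk (∑ i : Fin 0, u i ^ 2) (by positivity) = 0 := by ext; simp
    have h1 : (fun e : Fin 0 → ℝ => ∑ i, u i * e i) = fun _ => (0:ℝ) := by
      funext e; simp
    rw [h0, zero_mul, gaussianReal_zero_var, h1, Measure.map_const]
    simp
  | succ n ih =>
    intro u
    have hmp := measurePreserving_piFinSuccAbove (fun _ : Fin (n+1) => gaussianReal 0 v) 0
    set E := MeasurableEquiv.piFinSuccAbove (fun _ : Fin (n+1) => ℝ) 0
    have hcomp : (fun e : Fin (n+1) → ℝ => ∑ i, u i * e i)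
        = (fun p : ℝ × (Fin n → ℝ) => u 0 * p.1 + ∑ j, u j.succ * p.2 j) ∘ E := by
      funext e
      simp only [Function.comp_apply, E, MeasurableEquiv.piFinSuccAbove_apply]
      rw [Fin.sum_univ_succ]
      congr 1
    rw [hcomp, ← Measure.map_map (by fun_prop) E.measurable, hmp.map_eq]
    have hsplit : (fun p : ℝ × (Fin n → ℝ) => u 0 * p.1 + ∑ j, u j.succ * p.2 j)
        = (fun q : ℝ × ℝ => q.1 + q.2) ∘ (Prod.map (fun x => u 0 * x) (fun e => ∑ j, u j.succ * e j)) := by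
      funext p; rfl
    rw [hsplit, ← Measure.map_map (by fun_prop) (by fun_prop),
      ← Measure.map_prod_map _ _ (by fun_prop) (by fun_prop),
      gaussianReal_map_const_mul, ih (fun j => u j.succ), mul_zero, gaussian_prod_add]
    congr 1
    ext
    push_cast
    rw [Fin.sum_univ_succ]
    ring

lemma N_singleton (x : ℝ) : gaussianReal 0 1 {x} = 0 :=
  gaussianReal_absolutelyContinuous 0 one_ne_zero (volume_singleton)

lemma N_ne_top (s : Set ℝ) : gaussianReal 0 1 s ≠ ⊤ := measure_ne_top _ _

lemma N_Iic (x : ℝ) : gaussianReal 0 1 (Set.Iic x) = ENNReal.ofReal (stdGaussianCDF x) := by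
  rw [stdGaussianCDF, ENNReal.ofReal_toReal (N_ne_top _)]

lemma stdCDF_nonneg (x : ℝ) : 0 ≤ stdGaussianCDF x := ENNReal.toReal_nonneg

lemma stdCDF_le_one (x : ℝ) : stdGaussianCDF x ≤ 1 := by
  rw [stdGaussianCDF]
  have := measure_mono (Set.subset_univ (Set.Iic x)) (μ := gaussianReal 0 1)
  rw [measure_univ] at this
  simpa using ENNReal.toReal_mono (by simp) this

lemma stdCDF_mono : Monotone stdGaussianCDF := by
  intro x y h
  exact ENNReal.toReal_mono (N_ne_top _) (measure_mono (Set.Iic_subset_Iic.2 h))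

lemma N_Ioc_pos {x y : ℝ} (h : x < y) : 0 < gaussianReal 0 1 (Set.Ioc x y) := by
  rcases eq_or_lt_of_le (zero_le (a := gaussianReal 0 1 (Set.Ioc x y))) with h0 | h0
  · exfalso
    have := gaussianReal_absolutelyContinuous' 0 one_ne_zero (h0.symm : gaussianReal 0 1 (Set.Ioc x y) = 0)
    rw [Real.volume_Ioc] at this
    simp only [ENNReal.ofReal_eq_zero] at this
    linarith
  · exact h0

lemma stdCDF_strictMono : StrictMono stdGaussianCDF := by
  intro x y h
  have hsplit : Set.Iic y = Set.Iic x ∪ Set.Ioc x y := (Set.Iic_union_Ioc_eq_Iic h.le).symm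
  have hd : Disjoint (Set.Iic x) (Set.Ioc x y) := Set.disjoint_left.2 fun t ht ht' => by
    simp only [Set.mem_Iic] at ht
    simp only [Set.mem_Ioc] at ht'
    linarith [ht'.1]
  have : gaussianReal 0 1 (Set.Iic y)
      = gaussianReal 0 1 (Set.Iic x) + gaussianReal 0 1 (Set.Ioc x y) := by
    rw [hsplit, measure_union hd measurableSet_Ioc]
  rw [stdGaussianCDF, stdGaussianCDF, this, ENNReal.toReal_add (N_ne_top _) (N_ne_top _)]
  have := N_Ioc_pos h
  have hpos : 0 < (gaussianReal 0 1 (Set.Ioc x y)).toReal :=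
    ENNReal.toReal_pos (ne_of_gt this) (N_ne_top _)
  linarith

lemma N_neg_map : (gaussianReal 0 1).map (fun t : ℝ => -t) = gaussianReal 0 1 := by
  have h := gaussianReal_map_const_mul (μ := 0) (v := 1) (-1 : ℝ)
  simp only [neg_one_mul, neg_zero] at h
  rw [h]
  congr 1
  ext
  push_cast
  norm_num

lemma N_Ici (x : ℝ) : gaussianReal 0 1 (Set.Ici x) = ENNReal.ofReal (1 - stdGaussianCDF x) := by
  have hcompl : Set.Ici x = (Set.Iio x)ᶜ := by simp
  rw [hcompl, measure_compl measurableSet_Iio (N_ne_top _), measure_univ]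
  have hIio : gaussianReal 0 1 (Set.Iio x) = gaussianReal 0 1 (Set.Iic x) :=
    measure_congr (Iio_ae_eq_Iic' (N_singleton x))
  rw [hIio, N_Iic, ← ENNReal.ofReal_one, ← ENNReal.ofReal_sub _ (stdCDF_nonneg x)]

lemma stdCDF_neg (x : ℝ) : stdGaussianCDF (-x) = 1 - stdGaussianCDF x := by
  have h1 : gaussianReal 0 1 (Set.Iic (-x)) = gaussianReal 0 1 (Set.Ici x) := by
    have := Measure.map_apply (f := fun t : ℝ => -t) (μ := gaussianReal 0 1)
      (by fun_prop) (measurableSet_Iic (a := -x))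
    rw [N_neg_map] at this
    rw [this]
    congr 1
    ext t
    simp only [Set.mem_preimage, Set.mem_Iic, Set.mem_Ici]
    constructor <;> intro <;> linarith
  rw [stdGaussianCDF, h1, N_Ici, ENNReal.toReal_ofReal (by linarith [stdCDF_le_one x])]

lemma stdCDF_zero : stdGaussianCDF 0 = 1 / 2 := by
  have := stdCDF_neg 0
  rw [neg_zero] at this
  linarith

lemma stdCDF_lipschitz : ∀ x y : ℝ, x ≤ y →
    stdGaussianCDF y - stdGaussianCDF x ≤ (√(2 * π))⁻¹ * (y - x) := by
  intro x y h
  have hsplit : gaussianReal 0 1 (Set.Iic y)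
      = gaussianReal 0 1 (Set.Iic x) + gaussianReal 0 1 (Set.Ioc x y) := by
    rw [← measure_union (Set.disjoint_left.2 (fun t ht ht' => by
      simp only [Set.mem_Iic] at ht; simp only [Set.mem_Ioc] at ht'; linarith))
      measurableSet_Ioc, Set.Iic_union_Ioc_eq_Iic h]
  have hb : gaussianReal 0 1 (Set.Ioc x y) = ENNReal.ofReal (∫ t in Set.Ioc x y, gaussianPDFReal 0 1 t) :=
    gaussianReal_apply_eq_integral 0 one_ne_zero _
  have hbound : ∫ t in Set.Ioc x y, gaussianPDFReal 0 1 t ≤ (√(2 * π))⁻¹ * (y - x) := by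
    have := norm_setIntegral_le_of_norm_le_const (μ := volume) (s := Set.Ioc x y)
      (f := gaussianPDFReal 0 1) (C := (√(2 * π))⁻¹)
      (by rw [Real.volume_Ioc]; exact ENNReal.ofReal_lt_top)
      (fun t _ => by
        have := bdd_pdf_mean 1 t 0
        simpa [mul_one] using this)
    rw [Real.volume_real_Ioc_of_le h] at this
    calc ∫ t in Set.Ioc x y, gaussianPDFReal 0 1 t ≤ ‖∫ t in Set.Ioc x y, gaussianPDFReal 0 1 t‖ :=
        le_abs_self _
      _ ≤ (√(2 * π))⁻¹ * (y - x) := this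
  rw [stdGaussianCDF, stdGaussianCDF, hsplit, ENNReal.toReal_add (N_ne_top _) (N_ne_top _)]
  have h0 : (gaussianReal 0 1 (Set.Ioc x y)).toReal ≤ (√(2 * π))⁻¹ * (y - x) := by
    rw [hb, ENNReal.toReal_ofReal (setIntegral_nonneg measurableSet_Ioc
      (fun t _ => gaussianPDFReal_nonneg _ _ _))]
    exact hbound
  linarith

lemma stdCDF_continuous : Continuous stdGaussianCDF := by
  have hK : (0:ℝ) ≤ (√(2 * π))⁻¹ := by positivity
  apply LipschitzWith.continuous (K := Real.toNNReal ((√(2 * π))⁻¹))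
  apply LipschitzWith.of_dist_le_mul
  intro x y
  rw [Real.dist_eq, Real.dist_eq, Real.coe_toNNReal _ hK]
  rcases le_total x y with h | h
  · rw [abs_of_nonpos (by linarith [stdCDF_mono h]), abs_of_nonpos (by linarith)]
    have := stdCDF_lipschitz x y h
    linarith [this]
  · rw [abs_of_nonneg (by linarith [stdCDF_mono h]), abs_of_nonneg (by linarith)]
    have := stdCDF_lipschitz y x h
    linarith [this]

lemma stdCDF_tendsto_atTop : Tendsto stdGaussianCDF atTop (𝓝 1) := by
  have h := tendsto_measure_Iic_atTop (gaussianReal 0 1)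
  rw [measure_univ] at h
  have := (ENNReal.tendsto_toReal (by simp : (1:ℝ≥0∞) ≠ ⊤)).comp h
  exact this

lemma stdCDF_tendsto_atBot : Tendsto stdGaussianCDF atBot (𝓝 0) := by
  have key : ∀ x : ℝ, stdGaussianCDF x = 1 - stdGaussianCDF (-x) := by
    intro x
    have := stdCDF_neg (-x)
    rw [neg_neg] at this
    linarith
  rw [funext key]
  have h1 : Tendsto (fun x : ℝ => stdGaussianCDF (-x)) atBot (𝓝 1) :=
    stdCDF_tendsto_atTop.comp tendsto_neg_atBot_atTop
  have := (tendsto_const_nhds (x := (1:ℝ)) (f := atBot)).sub h1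
  simpa using this

lemma stdCDF_surj {p : ℝ} (h0 : 0 < p) (h1 : p < 1) : ∃ x, stdGaussianCDF x = p := by
  obtain ⟨x₁, hx₁⟩ := (stdCDF_tendsto_atTop.eventually (eventually_gt_nhds h1)).exists
  obtain ⟨x₀, hx₀⟩ := (stdCDF_tendsto_atBot.eventually (eventually_lt_nhds h0)).exists
  have hx : x₀ ≤ x₁ := by
    by_contra hc
    push_neg at hc
    have := stdCDF_mono hc.le
    linarith
  have := intermediate_value_Icc hx stdCDF_continuous.continuousOn
  obtain ⟨x, _, hxx⟩ := this ⟨hx₀.le, hx₁.le⟩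
  exact ⟨x, hxx⟩


lemma stdCDF_pos (x : ℝ) : 0 < stdGaussianCDF x := by
  rw [stdGaussianCDF]
  apply ENNReal.toReal_pos _ (N_ne_top _)
  intro h0
  have h1 : gaussianReal 0 1 (Set.Ioc (x-1) x) = 0 :=
    measure_mono_null (Set.Ioc_subset_Iic_self) h0
  exact absurd h1 (ne_of_gt (N_Ioc_pos (by linarith)))

/-- Randomized smoothing robustness in the binary linear (halfspace) case: if the base
classifier is `d z = 1` iff `⟨u, z⟩ ≥ c` with `‖u‖ = 1`, and at input `z` the smoothed
probability of class 1 is at least `p_A > 1/2`, then for every perturbation `δ` with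
`‖δ‖₂ < σ Φ⁻¹(p_A)` the smoothed classifier at `z + δ` still predicts class 1 (i.e.
class 1 keeps majority probability `> 1/2`). -/
theorem randomized_smoothing_halfspace {m : ℕ} (σ : NNReal) (hσ : 0 < σ)
    (u : Fin m → ℝ) (hu : ∑ i, u i ^ 2 = 1) (c : ℝ)
    (d : (Fin m → ℝ) → Fin 2)
    (hd : ∀ z, d z = if c ≤ ∑ i, u i * z i then 1 else 0)
    (z : Fin m → ℝ) (pA : ℝ) (hpA : 1 / 2 < pA) (hpA' : pA ≤ 1)
    (hmaj : ENNReal.ofReal pA ≤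
      (Measure.pi fun _ : Fin m => gaussianReal 0 (σ ^ 2)) {e | d (z + e) = 1}) :
    ∀ δ : Fin m → ℝ, Real.sqrt (∑ i, δ i ^ 2) < σ * stdGaussianCDFInv pA →
      (1 : ENNReal) / 2 <
        (Measure.pi fun _ : Fin m => gaussianReal 0 (σ ^ 2)) {e | d (z + δ + e) = 1} := by
  intro δ hδ
  have hσR : (0:ℝ) < (σ:ℝ) := hσ
  set μ := Measure.pi fun _ : Fin m => gaussianReal 0 (σ ^ 2) with hμ
  set L : (Fin m → ℝ) → ℝ := fun e => ∑ i, u i * e i with hL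
  have hLmeas : Measurable L := by
    apply Finset.measurable_sum
    intro i _
    fun_prop
  -- the map of μ under L
  have hmap : μ.map L = gaussianReal 0 (σ ^ 2) := by
    rw [hμ, hL, pi_gaussian_map_sum (σ^2) m u]
    congr 1
    ext
    push_cast
    rw [hu]
    ring
  -- gaussianReal 0 σ² as scaled standard gaussian
  have hscale : gaussianReal 0 ((σ:ℝ≥0) ^ 2) = (gaussianReal 0 1).map (fun x => (σ:ℝ) * x) := by
    rw [gaussianReal_map_const_mul, mul_zero]
    congr 1
    ext
    push_cast
    ring
  have hIci : ∀ t : ℝ, gaussianReal 0 ((σ:ℝ≥0) ^ 2) (Set.Ici t)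
      = ENNReal.ofReal (1 - stdGaussianCDF (t / σ)) := by
    intro t
    rw [hscale, Measure.map_apply (by fun_prop) measurableSet_Ici]
    have : (fun x : ℝ => (σ:ℝ) * x) ⁻¹' Set.Ici t = Set.Ici (t / σ) := by
      ext x
      simp only [Set.mem_preimage, Set.mem_Ici]
      rw [div_le_iff₀ hσR, mul_comm]
    rw [this, N_Ici]
  -- sets as preimages
  have hset : ∀ w : Fin m → ℝ, {e | d (w + e) = 1} = L ⁻¹' (Set.Ici (c - ∑ i, u i * w i)) := by
    intro w
    ext e
    simp only [Set.mem_setOf_eq, Set.mem_preimage, Set.mem_Ici, hd, hL]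
    have hsum : ∑ i, u i * (w + e) i = (∑ i, u i * w i) + ∑ i, u i * e i := by
      simp_rw [Pi.add_apply, mul_add, Finset.sum_add_distrib]
    rw [hsum]
    by_cases hc : c ≤ (∑ i, u i * w i) + ∑ i, u i * e i
    · simp [hc]
      linarith
    · simp [hc]
      linarith [not_le.mp hc]
  have hmeasure : ∀ w : Fin m → ℝ, μ {e | d (w + e) = 1}
      = ENNReal.ofReal (1 - stdGaussianCDF ((c - ∑ i, u i * w i) / σ)) := by
    intro w
    rw [hset w, ← Measure.map_apply hLmeas measurableSet_Ici, hmap, hIci]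
  -- from hmaj
  rw [hmeasure z] at hmaj
  set t₀ : ℝ := (c - ∑ i, u i * z i) / σ with ht₀
  have hle : pA ≤ 1 - stdGaussianCDF t₀ := by
    rwa [ENNReal.ofReal_le_ofReal_iff (by linarith [stdCDF_le_one t₀])] at hmaj
  have hpAlt1 : pA < 1 := by
    rcases lt_or_eq_of_le hpA' with h | h
    · exact h
    · exfalso
      have := stdCDF_pos t₀
      linarith
  obtain ⟨x, hx⟩ := stdCDF_surj (by linarith : (0:ℝ) < pA) hpAlt1
  set r : ℝ := stdGaussianCDFInv pA with hr
  have hrval : stdGaussianCDF r = pA := Function.invFun_eq ⟨x, hx⟩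
  have hrpos : 0 < r := by
    by_contra hc
    push_neg at hc
    have := stdCDF_strictMono.monotone hc
    rw [hrval, stdCDF_zero] at this
    linarith
  have ht0r : t₀ ≤ -r := by
    have h1 : stdGaussianCDF t₀ ≤ stdGaussianCDF (-r) := by
      rw [stdCDF_neg, hrval]
      linarith
    exact stdCDF_strictMono.le_iff_le.mp h1
  -- Cauchy-Schwarz
  set D : ℝ := ∑ i, u i * δ i with hD
  have hcs : |D| ≤ Real.sqrt (∑ i, δ i ^ 2) := by
    have h1 : D ^ 2 ≤ (∑ i, u i ^ 2) * ∑ i, δ i ^ 2 :=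
      Finset.sum_mul_sq_le_sq_mul_sq Finset.univ u δ
    rw [hu, one_mul] at h1
    calc |D| = Real.sqrt (D ^ 2) := (Real.sqrt_sq_eq_abs D).symm
      _ ≤ Real.sqrt (∑ i, δ i ^ 2) := Real.sqrt_le_sqrt h1
  have hDlt : |D| < σ * r := lt_of_le_of_lt hcs hδ
  -- final
  rw [hmeasure (z + δ)]
  have hsum2 : ∑ i, u i * (z + δ) i = (∑ i, u i * z i) + D := by
    simp_rw [Pi.add_apply, mul_add, Finset.sum_add_distrib, hD]
  rw [hsum2]
  set t₁ : ℝ := (c - ((∑ i, u i * z i) + D)) / σ with ht₁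
  have ht1neg : t₁ < 0 := by
    have h1 : t₁ = t₀ - D / σ := by
      rw [ht₁, ht₀]
      field_simp
      ring
    have h2 : -D / σ < r := by
      rw [div_lt_iff₀ hσR]
      have := neg_abs_le D
      calc -D ≤ |D| := by linarith [abs_nonneg D, neg_le_abs D]
        _ < σ * r := hDlt
        _ = r * σ := mul_comm _ _
    rw [h1]
    have : -(D / σ) < r := by rwa [neg_div] at h2
    linarith [ht0r, this]
  have hΦ : stdGaussianCDF t₁ < 1 / 2 := by
    have := stdCDF_strictMono ht1neg
    rwa [stdCDF_zero] at this
  have hhalf : (1 : ENNReal) / 2 = ENNReal.ofReal (1/2) := by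
    rw [ENNReal.ofReal_div_of_pos (by norm_num), ENNReal.ofReal_one, ENNReal.ofReal_ofNat]
  rw [hhalf]
  apply (ENNReal.ofReal_lt_ofReal_iff (by linarith)).mpr
  linarith
end

section
/- If μ is a probability measure on ℝ^m with compact support, then there exists a closed ball B(z, r) of minimal radius r among all closed balls containing at least half of the mass of μ, i.e., the infimum of radii r such that some closed ball of radius r has μ-measure ≥ 1/2 is attained. -/
open MeasureTheory Metric

/-- Existence of a minimum enclosing ball of half the mass: if `μ` is a probability
measure on `ℝ^m` with compact support, then among all closed balls of `μ`-measure at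
least `1/2` there is one of minimal radius. -/
theorem exists_min_half_mass_ball {m : ℕ}
    (μ : Measure (EuclideanSpace ℝ (Fin m))) [IsProbabilityMeasure μ]
    (hsupp : ∃ K : Set (EuclideanSpace ℝ (Fin m)), IsCompact K ∧ μ Kᶜ = 0) :
    ∃ (z : EuclideanSpace ℝ (Fin m)) (r : ℝ), 0 ≤ r ∧
      (1 : ENNReal) / 2 ≤ μ (closedBall z r) ∧
      ∀ (z' : EuclideanSpace ℝ (Fin m)) (r' : ℝ),
        (1 : ENNReal) / 2 ≤ μ (closedBall z' r') → r ≤ r' := by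
  classical
  obtain ⟨K, hK, hKc⟩ := hsupp
  -- μ K = 1
  have hμK : (1 : ENNReal) ≤ μ K := by
    have h1 : μ Set.univ ≤ μ K + μ Kᶜ := by
      rw [← Set.union_compl_self K]; exact measure_union_le _ _
    rw [measure_univ, hKc, add_zero] at h1
    exact h1
  -- the set of achievable radii
  set S : Set ℝ := {r : ℝ | ∃ z : EuclideanSpace ℝ (Fin m), (1 : ENNReal) / 2 ≤ μ (closedBall z r)} with hS
  have half_pos : (0 : ENNReal) < 1 / 2 := by norm_num
  have hS0 : ∀ r ∈ S, (0 : ℝ) ≤ r := by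
    rintro r ⟨z, hz⟩
    have hne : (closedBall z r).Nonempty := by
      by_contra h
      rw [Set.not_nonempty_iff_eq_empty] at h
      rw [h] at hz
      simp at hz
    exact nonempty_closedBall.mp hne
  have hbdd : BddBelow S := ⟨0, hS0⟩
  have hSne : S.Nonempty := by
    obtain ⟨R, hR⟩ := hK.isBounded.subset_closedBall 0
    exact ⟨R, 0, le_trans (by norm_num) (le_trans hμK (measure_mono hR))⟩
  set r₀ : ℝ := sInf S with hr₀
  have hr₀0 : 0 ≤ r₀ := le_csInf hSne hS0
  -- choose a minimizing sequence
  have key : ∀ n : ℕ, ∃ (z : EuclideanSpace ℝ (Fin m)) (r : ℝ),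
      (1 : ENNReal) / 2 ≤ μ (closedBall z r) ∧ r < r₀ + 1 / (n + 1) := by
    intro n
    have : sInf S < r₀ + 1 / (n + 1) := by
      have : (0:ℝ) < 1 / (n + 1) := by positivity
      linarith
    obtain ⟨r, hrS, hrlt⟩ := exists_lt_of_csInf_lt hSne this
    obtain ⟨z, hz⟩ := hrS
    exact ⟨z, r, hz, hrlt⟩
  choose zs rs hμs hrs using key
  -- the centers stay in a compact set
  have hmem : ∀ n, zs n ∈ cthickening (r₀ + 1) K := by
    intro n
    have hpos : μ (closedBall (zs n) (rs n)) ≠ 0 := (lt_of_lt_of_le half_pos (hμs n)).ne'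
    have hint : ¬ (closedBall (zs n) (rs n) ⊆ Kᶜ) := by
      intro h
      exact hpos (measure_mono_null h hKc)
    obtain ⟨k, hk1, hk2⟩ := Set.not_subset.mp hint
    rw [Set.notMem_compl_iff] at hk2
    refine mem_cthickening_of_dist_le _ k _ _ hk2 ?_
    have h1 : dist (zs n) k ≤ rs n := by
      rw [mem_closedBall] at hk1; rw [dist_comm]; exact hk1
    have h2 : (1 : ℝ) / (n + 1) ≤ 1 := by
      rw [div_le_one (by positivity)]
      linarith [Nat.cast_nonneg (α := ℝ) n]
    linarith [hrs n]
  have hcomp : IsCompact (cthickening (r₀ + 1) K) := hK.cthickening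
  obtain ⟨z, _, φ, hφ, hlim⟩ := hcomp.tendsto_subseq hmem
  refine ⟨z, r₀, hr₀0, ?_, ?_⟩
  · -- μ (closedBall z r₀) ≥ 1/2
    have hball : ∀ ε : ℝ, 0 < ε → (1 : ENNReal) / 2 ≤ μ (closedBall z (r₀ + ε)) := by
      intro ε hε
      obtain ⟨N₁, hN₁⟩ := exists_nat_one_div_lt (show (0:ℝ) < ε / 2 by linarith)
      obtain ⟨N₂, hN₂⟩ := (Metric.tendsto_atTop.mp hlim) (ε / 2) (by linarith)
      set n := max N₁ N₂
      have hd : dist (zs (φ n)) z ≤ ε / 2 := le_of_lt (hN₂ n (le_max_right _ _))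
      have hφn : (n : ℕ) ≤ φ n := hφ.le_apply
      have hinv : (1 : ℝ) / (φ n + 1) ≤ 1 / (N₁ + 1) := by
        apply div_le_div_of_nonneg_left (by norm_num) (by positivity)
        have : (N₁ : ℝ) ≤ φ n := by
          exact_mod_cast le_trans (le_max_left _ _) hφn
        linarith
      have hr : rs (φ n) ≤ r₀ + ε / 2 := by
        have := hrs (φ n)
        linarith
      have hsub : closedBall (zs (φ n)) (rs (φ n)) ⊆ closedBall z (r₀ + ε) := by
        intro x hx
        rw [mem_closedBall] at hx ⊢
        calc dist x z ≤ dist x (zs (φ n)) + dist (zs (φ n)) z := dist_triangle _ _ _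
          _ ≤ (r₀ + ε / 2) + ε / 2 := add_le_add (le_trans hx hr) hd
          _ = r₀ + ε := by ring
      exact le_trans (hμs (φ n)) (measure_mono hsub)
    have hiInter : closedBall z r₀ = ⋂ n : ℕ, closedBall z (r₀ + 1 / (n + 1)) := by
      ext x
      simp only [Set.mem_iInter, mem_closedBall]
      constructor
      · intro h n
        have : (0:ℝ) < 1 / (n + 1) := by positivity
        linarith
      · intro h
        refine le_of_forall_pos_le_add fun ε hε => ?_
        obtain ⟨n, hn⟩ := exists_nat_one_div_lt hε
        linarith [h n]
    have hdir : Directed (· ⊇ ·) (fun n : ℕ => closedBall z (r₀ + 1 / (n + 1))) := by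
      intro a b
      have key : ∀ c : ℕ, c ≤ max a b →
          closedBall z (r₀ + 1 / (max a b + 1)) ⊆ closedBall z (r₀ + 1 / (c + 1)) := by
        intro c hc
        apply closedBall_subset_closedBall
        have h1 : (1:ℝ) / (max a b + 1) ≤ 1 / (c + 1) := by
          apply div_le_div_of_nonneg_left (by norm_num) (by positivity)
          have : (c : ℝ) ≤ max a b := by exact_mod_cast hc
          linarith
        linarith
      exact ⟨max a b, key a (le_max_left _ _), key b (le_max_right _ _)⟩
    rw [hiInter, Directed.measure_iInter
      (fun n => measurableSet_closedBall.nullMeasurableSet) hdir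
      ⟨0, measure_ne_top μ _⟩]
    exact le_iInf fun n => hball _ (by positivity)
  · intro z' r' h
    exact csInf_le hbdd ⟨z', h⟩
end
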